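/- For $|\rho_0| < 1$ and $\theta_0 > 0$, the quadratic form $\frac{\theta_0^2}{4(1-\rho_0^2)^2} \, v^\top \Sigma_\xi \, v$ with $v = (1, 1, -2\rho_0\sqrt{1+\rho_0^2})^\top$ and $\Sigma_\xi = \begin{pmatrix} 2 & 2\rho_0^2 & 2\rho_0/\sqrt{1+\rho_0^2} \\ 2\rho_0^2 & 2 & 2\rho_0/\sqrt{1+\rho_0^2} \\ 2\rho_0/\sqrt{1+\rho_0^2} & 2\rho_0/\sqrt{1+\rho_0^2} & 1 \end{pmatrix}$ equals $\theta_0^2$. -/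

import Mathlib

open Matrix Real

theorem stmt13 (ρ₀ θ₀ : ℝ) (hρ : |ρ₀| < 1) (hθ : 0 < θ₀) :
    θ₀ ^ 2 / (4 * (1 - ρ₀ ^ 2) ^ 2) *
      (![1, 1, -2 * ρ₀ * Real.sqrt (1 + ρ₀ ^ 2)] ⬝ᵥ
        (!![2, 2 * ρ₀ ^ 2, 2 * ρ₀ / Real.sqrt (1 + ρ₀ ^ 2);
            2 * ρ₀ ^ 2, 2, 2 * ρ₀ / Real.sqrt (1 + ρ₀ ^ 2);
            2 * ρ₀ / Real.sqrt (1 + ρ₀ ^ 2), 2 * ρ₀ / Real.sqrt (1 + ρ₀ ^ 2), 1] *ᵥ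
          ![1, 1, -2 * ρ₀ * Real.sqrt (1 + ρ₀ ^ 2)])) = θ₀ ^ 2 := by
  have hpos : (0:ℝ) < 1 + ρ₀ ^ 2 := by positivity
  have hs : Real.sqrt (1 + ρ₀ ^ 2) ^ 2 = 1 + ρ₀ ^ 2 := Real.sq_sqrt hpos.le
  have hs0 : Real.sqrt (1 + ρ₀ ^ 2) ≠ 0 := by positivity
  have h1 : (1 - ρ₀ ^ 2) ≠ 0 := by
    have := abs_lt.mp hρ
    nlinarith [this.1, this.2]
  simp only [dotProduct, Matrix.mulVec, Fin.sum_univ_three, Matrix.cons_val_zero,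
    Matrix.cons_val_one, Matrix.head_cons, Matrix.cons_val_two, Matrix.tail_cons,
    Matrix.of_apply, Matrix.cons_val', Matrix.empty_val', Matrix.cons_val_fin_one,
    Matrix.head_fin_const]
  field_simp
  linear_combination (4 * ρ₀ ^ 2) * hs
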